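/- For k ≥ 2, ∑_{n₁,…,n_k = 1}^∞ (μ*F)(n₁,…,n_k)/(n₁⋯n_k) with F(n₁,…,n_k) = f(gcd(n₁,…,n_k)) equals (1/ζ(k)) ∑_{m=1}^∞ f(m)/m^k, provided ∑ |f(m)|/m^k < ∞. -/

import Mathlib

open Finset Filter

noncomputable section

/-- The `k`-variable Möbius inversion `μ * F` (Dirichlet convolution in `k` variables
with the `k`-variable Möbius function `μ(n₁)⋯μ(n_k)`). -/
def mconv (k : ℕ) (F : (Fin k → ℕ) → ℂ) (n : Fin k → ℕ) : ℂ :=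
  ∑ d ∈ Fintype.piFinset (fun i => (n i).divisors),
    (∏ i, ((ArithmeticFunction.moebius ((n i) / (d i)) : ℤ) : ℂ)) * F d

open ArithmeticFunction
open scoped LSeries.notation

/-- `∑_{e | N} μ(N/e) = [N = 1]`. -/
lemma sum_moebius_div_eq (N : ℕ) :
    ∑ e ∈ N.divisors, ((moebius (N / e) : ℤ) : ℂ) = if N = 1 then 1 else 0 := by
  have h := (ArithmeticFunction.sum_eq_iff_sum_mul_moebius_eq (R := ℂ)
      (f := fun n => if n = 1 then 1 else 0) (g := fun _ => 1)).mp ?_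
  · rcases Nat.eq_zero_or_pos N with rfl | hN
    · simp
    · have := h N hN
      rw [Nat.sum_divisorsAntidiagonal' (f := fun a b => ((moebius a : ℤ) : ℂ) * 1)] at this
      simpa using this
  · intro n hn
    rw [Finset.sum_ite_eq' n.divisors 1 (fun _ => (1 : ℂ)),
      if_pos (Nat.one_mem_divisors.mpr hn.ne')]

lemma inner_sum_eq (m n : ℕ) (hn : n ≠ 0) (hmn : m ∣ n) :
    ∑ e ∈ n.divisors, (if m ∣ e then ((moebius (n / e) : ℤ) : ℂ) else 0) =
      if n = m then 1 else 0 := by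
  have hm : m ≠ 0 := fun h => hn (by simpa [h] using hmn)
  obtain ⟨c, rfl⟩ := hmn
  rw [← Finset.sum_filter]
  have hc : c ≠ 0 := fun h => hn (by simp [h])
  rw [Finset.sum_nbij' (i := fun e => e / m) (j := fun t => m * t)
    (s := (m * c).divisors.filter (fun e => m ∣ e)) (t := c.divisors)
    (g := fun t => ((moebius (c / t) : ℤ) : ℂ))]
  · rw [sum_moebius_div_eq]
    simp [Nat.mul_eq_left hm]
  · intro e he
    simp only [Finset.mem_filter, Nat.mem_divisors] at he
    obtain ⟨⟨hd, _⟩, t, rfl⟩ := he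
    rw [Nat.mul_div_cancel_left _ (Nat.pos_of_ne_zero hm)]
    exact Nat.mem_divisors.mpr ⟨(Nat.mul_dvd_mul_iff_left (Nat.pos_of_ne_zero hm)).mp hd, hc⟩
  · intro t ht
    simp only [Nat.mem_divisors] at ht
    simp only [Finset.mem_filter, Nat.mem_divisors]
    exact ⟨⟨Nat.mul_dvd_mul_left m ht.1, by positivity⟩, Dvd.intro t rfl⟩
  · intro e he
    simp only [Finset.mem_filter, Nat.mem_divisors] at he
    obtain ⟨_, t, rfl⟩ := he
    rw [Nat.mul_div_cancel_left _ (Nat.pos_of_ne_zero hm)]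
  · intro t ht
    rw [Nat.mul_div_cancel_left _ (Nat.pos_of_ne_zero hm)]
  · intro e he
    simp only [Finset.mem_filter, Nat.mem_divisors] at he
    obtain ⟨_, t, rfl⟩ := he
    rw [Nat.mul_div_cancel_left _ (Nat.pos_of_ne_zero hm),
      Nat.mul_div_mul_left _ _ (Nat.pos_of_ne_zero hm)]


def G (f : ℕ → ℂ) (m : ℕ) : ℂ := ∑ d ∈ m.divisors, ((moebius (m / d) : ℤ) : ℂ) * f d

lemma mconv_gcd (k : ℕ) [NeZero k] (f : ℕ → ℂ) (v : Fin k → ℕ) :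
    mconv k (fun w => f (Finset.univ.gcd w)) v =
      if ∀ i, v i = v 0 then G f (v 0) else 0 := by
  by_cases h0' : ∃ i, v i = 0
  · obtain ⟨i, hi⟩ := h0'
    rw [mconv, Finset.sum_eq_zero]
    · split
      · next hc =>
          have h00 : v 0 = 0 := (hc i) ▸ hi
          simp [G, h00]
      · rfl
    · intro d hd
      exact absurd (Fintype.mem_piFinset.mp hd i) (by simp [hi])
  · push_neg at h0'
    set N := Finset.univ.gcd v with hNdef
    have hN0 : N ≠ 0 := fun h => h0' 0 (Finset.gcd_eq_zero_iff.mp h 0 (mem_univ 0))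
    have hinv : ∀ n > 0, ∑ m ∈ n.divisors, G f m = f n := by
      rw [ArithmeticFunction.sum_eq_iff_sum_mul_moebius_eq]
      intro n hn
      rw [Nat.sum_divisorsAntidiagonal' (f := fun a b => ((moebius a : ℤ) : ℂ) * f b)]
      rfl
    rw [mconv]
    have key : ∀ d ∈ Fintype.piFinset (fun i => (v i).divisors),
        f (Finset.univ.gcd d) = ∑ m ∈ N.divisors, if (∀ i, m ∣ d i) then G f m else 0 := by
      intro d hd
      have hdmem : ∀ i, d i ∈ (v i).divisors := fun i => Fintype.mem_piFinset.mp hd i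
      have hd0 : ∀ i, d i ≠ 0 := fun i => (Nat.pos_of_mem_divisors (hdmem i)).ne'
      have hgd : Finset.univ.gcd d ≠ 0 :=
        fun h => hd0 0 (Finset.gcd_eq_zero_iff.mp h 0 (mem_univ 0))
      rw [← Finset.sum_filter]
      have hfe : N.divisors.filter (fun m => ∀ i, m ∣ d i) = (Finset.univ.gcd d).divisors := by
        ext m
        simp only [Finset.mem_filter, Nat.mem_divisors]
        constructor
        · rintro ⟨⟨_, _⟩, h⟩
          exact ⟨Finset.dvd_gcd fun i _ => h i, hgd⟩
        · intro h
          have hm : ∀ i, m ∣ d i := fun i => h.1.trans (Finset.gcd_dvd (mem_univ i))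
          exact ⟨⟨Finset.dvd_gcd fun i _ =>
            (hm i).trans (Nat.dvd_of_mem_divisors (hdmem i)), hN0⟩, hm⟩
      rw [hfe, hinv _ (Nat.pos_of_ne_zero hgd)]
    rw [Finset.sum_congr rfl (fun d hd => by rw [key d hd])]
    simp_rw [Finset.mul_sum]
    rw [Finset.sum_comm]
    have step : ∀ m ∈ N.divisors,
        (∑ d ∈ Fintype.piFinset (fun i => (v i).divisors),
          (∏ i, ((moebius (v i / d i) : ℤ) : ℂ)) * (if (∀ i, m ∣ d i) then G f m else 0))
        = (if ∀ i, v i = m then 1 else 0) * G f m := by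
      intro m hm
      have hmd : ∀ i, m ∣ v i :=
        fun i => (Nat.dvd_of_mem_divisors hm).trans (Finset.gcd_dvd (mem_univ i))
      have hterm : ∀ d : Fin k → ℕ,
          (∏ i, ((moebius (v i / d i) : ℤ) : ℂ)) * (if (∀ i, m ∣ d i) then G f m else 0)
          = (∏ i, if m ∣ d i then ((moebius (v i / d i) : ℤ) : ℂ) else 0) * G f m := by
        intro d
        by_cases h : ∀ i, m ∣ d i
        · rw [if_pos h, Finset.prod_congr rfl (fun i _ => (if_pos (h i)).symm)]
        · push_neg at h
          obtain ⟨i, hi⟩ := h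
          have hz : (if m ∣ d i then ((moebius (v i / d i) : ℤ) : ℂ) else 0) = 0 := if_neg hi
          rw [if_neg (fun hh => hi (hh i)), mul_zero,
            Finset.prod_eq_zero (mem_univ i) hz, zero_mul]
      simp_rw [hterm]
      rw [← Finset.sum_mul, ← Finset.prod_univ_sum (t := fun i => (v i).divisors)
        (f := fun i e => if m ∣ e then ((moebius (v i / e) : ℤ) : ℂ) else 0)]
      congr 1
      rw [Finset.prod_congr rfl (fun i _ => inner_sum_eq m (v i) (h0' i) (hmd i))]
      by_cases hc : ∀ i, v i = m
      · rw [if_pos hc, Finset.prod_congr rfl fun i _ => if_pos (hc i), Finset.prod_const_one]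
      · push_neg at hc
        obtain ⟨i, hi⟩ := hc
        have hz : (if v i = m then (1 : ℂ) else 0) = 0 := if_neg hi
        rw [if_neg (fun hh => hi (hh i)), Finset.prod_eq_zero (mem_univ i) hz]
    rw [Finset.sum_congr rfl step]
    by_cases hc : ∀ i, v i = v 0
    · rw [if_pos hc]
      have hv0N : v 0 ∈ N.divisors :=
        Nat.mem_divisors.mpr ⟨Finset.dvd_gcd fun i _ => (hc i) ▸ dvd_rfl, hN0⟩
      rw [Finset.sum_eq_single_of_mem (v 0) hv0N]
      · rw [if_pos hc, one_mul]
      · intro m _ hne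
        rw [if_neg (fun h => hne ((h 0).symm)), zero_mul]
    · rw [if_neg hc, Finset.sum_eq_zero]
      intro m _
      rw [if_neg (fun h => hc (fun i => (h i).trans (h 0).symm)), zero_mul]


theorem series_mconv_gcd (k : ℕ) (hk : 2 ≤ k) (f : ℕ → ℂ)
    (hf : Summable fun m : ℕ => ‖f m‖ / (m : ℝ) ^ k) :
    ∑' v : Fin k → ℕ, mconv k (fun w => f (Finset.univ.gcd w)) v / ∏ i, (v i : ℂ) =
      (1 / riemannZeta k) * ∑' m : ℕ, f m / (m : ℂ) ^ k := by
  haveI : NeZero k := ⟨by omega⟩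
  classical
  have h1 : ∀ v : Fin k → ℕ, mconv k (fun w => f (Finset.univ.gcd w)) v / ∏ i, (v i : ℂ)
      = if ∀ i, v i = v 0 then G f (v 0) / (v 0 : ℂ) ^ k else 0 := by
    intro v
    rw [mconv_gcd]
    by_cases hc : ∀ i, v i = v 0
    · rw [if_pos hc, if_pos hc]
      congr 1
      rw [Finset.prod_congr rfl (fun i _ => by rw [hc i]), Finset.prod_const,
        Finset.card_univ, Fintype.card_fin]
    · rw [if_neg hc, if_neg hc, zero_div]
  rw [tsum_congr h1]
  have h2 : (∑' v : Fin k → ℕ, if ∀ i, v i = v 0 then G f (v 0) / (v 0 : ℂ) ^ k else 0)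
      = ∑' m : ℕ, G f m / (m : ℂ) ^ k := by
    apply tsum_eq_tsum_of_ne_zero_bij
      (i := fun m => fun _ : Fin k => (m.1 : ℕ))
    · intro m1 m2 h
      exact Subtype.ext (congrFun h 0)
    · intro v hv
      simp only [Function.mem_support] at hv
      have hc : ∀ i, v i = v 0 := by
        by_contra h; rw [if_neg h] at hv; exact hv rfl
      rw [if_pos hc] at hv
      exact ⟨⟨v 0, hv⟩, funext fun i => (hc i).symm⟩
    · intro m
      rw [if_pos (fun _ => rfl)]
  rw [h2]
  have hre : 1 < ((k : ℕ) : ℂ).re := by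
    rw [Complex.natCast_re]
    exact_mod_cast lt_of_lt_of_le one_lt_two hk
  have hfsum : LSeriesSummable f (k : ℂ) := by
    apply Summable.of_norm
    have heq : ∀ n : ℕ, ‖LSeries.term f (k : ℂ) n‖ = ‖f n‖ / (n : ℝ) ^ k := by
      intro n
      rw [LSeries.norm_term_eq]
      rcases eq_or_ne n 0 with rfl | hn
      · simp [zero_pow (by omega : k ≠ 0)]
      · rw [if_neg hn, Complex.natCast_re, Real.rpow_natCast]
    exact Summable.congr hf (fun n => (heq n).symm)
  have hμsum : LSeriesSummable ↗ArithmeticFunction.moebius (k : ℂ) :=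
    ArithmeticFunction.LSeriesSummable_moebius_iff.mpr hre
  have hGL : (∑' m : ℕ, G f m / (m : ℂ) ^ k)
      = LSeries (↗ArithmeticFunction.moebius ⍟ f) (k : ℂ) := by
    apply tsum_congr
    intro n
    rcases eq_or_ne n 0 with rfl | hn
    · simp [G]
    · rw [LSeries.term_of_ne_zero hn, Complex.cpow_natCast]
      congr 1
      rw [LSeries.convolution_def]
      exact (Nat.sum_divisorsAntidiagonal' (f := fun a b => ((moebius a : ℤ) : ℂ) * f b)).symm
  rw [hGL, LSeries_convolution' hμsum hfsum]
  have hμval : LSeries ↗ArithmeticFunction.moebius (k : ℂ) = 1 / riemannZeta k := by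
    have hmul := ArithmeticFunction.LSeries_zeta_mul_Lseries_moebius hre
    rw [ArithmeticFunction.LSeries_zeta_eq_riemannZeta hre] at hmul
    exact eq_one_div_of_mul_eq_one_right hmul
  have hLf : LSeries f (k : ℂ) = ∑' m : ℕ, f m / (m : ℂ) ^ k := by
    apply tsum_congr
    intro n
    rcases eq_or_ne n 0 with rfl | hn
    · simp [zero_pow (by omega : k ≠ 0)]
    · rw [LSeries.term_of_ne_zero hn, Complex.cpow_natCast]
  rw [hμval, hLf]
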